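/- (Homological equation along a non-periodic flow.) Let J be an invertible skew-symmetric 2n×2n real matrix, let H₀ : ℝ^{2n} → ℝ be C² such that the flow Φ^t of ż = J∇H₀(z) is globally defined, and let W : ℝ^{2n} → ℝ be continuous. Let z₀ ∈ ℝ^{2n} be such that τ ↦ W(Φ^τ(z₀)) is integrable on ℝ and lim_{τ→+∞} ( W(Φ^{−τ}(z₀)) + W(Φ^{τ}(z₀)) ) = 0. Define g(t) := −(1/2)∫_ℝ sgn(τ) W(Φ^{τ+t}(z₀)) dτ. Then g is differentiable at t = 0 with g'(0) = W(z₀). Equivalently, the function G(z) := −(1/2)∫_ℝ sgn(τ) W(Φ^{τ}(z)) dτ satisfies (d/dt)|_{t=0} G(Φ^t(z₀)) = W(z₀), i.e. G solves the homological equation {H₀, G} + W = 0 at z₀, where {H₀, G}(z₀) is understood as −(d/dt)|_{t=0} G(Φ^t(z₀)). -/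

import Mathlib

open MeasureTheory Filter
open scoped RealInnerProductSpace Matrix

/-- The Poisson tensor `J` acting as a continuous linear map on `ℝ^{2n}`. -/
noncomputable def poissonCLM {m : ℕ} (J : Matrix (Fin m) (Fin m) ℝ) :
    EuclideanSpace ℝ (Fin m) →L[ℝ] EuclideanSpace ℝ (Fin m) :=
  Matrix.toEuclideanCLM (𝕜 := ℝ) J

/-- **Homological equation along a non-periodic flow.**
Let `Φ` be the globally defined flow of `ż = J∇H₀(z)`, `W` continuous, and `z₀` a point such
that `τ ↦ W(Φ^τ(z₀))` is integrable on `ℝ` and `W(Φ^{−τ}(z₀)) + W(Φ^{τ}(z₀)) → 0` as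
`τ → +∞`. Then `g(t) := −(1/2)∫_ℝ sgn(τ) W(Φ^{τ+t}(z₀)) dτ` is differentiable at `t = 0`
with `g'(0) = W(z₀)`; i.e. `G(z) := −(1/2)∫ sgn(τ) W(Φ^τ(z)) dτ` solves the homological
equation `{H₀, G} + W = 0` at `z₀`, there `{H₀,G}(z₀) = −(d/dt)|₀ G(Φ^t(z₀))`. -/
theorem homological_equation_nonperiodic (n : ℕ)
    (J : Matrix (Fin (2*n)) (Fin (2*n)) ℝ) (hJinv : IsUnit J) (hJskew : Jᵀ = -J)
    (H0 : EuclideanSpace ℝ (Fin (2*n)) → ℝ) (hH0 : ContDiff ℝ 2 H0)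
    (Φ : ℝ → EuclideanSpace ℝ (Fin (2*n)) → EuclideanSpace ℝ (Fin (2*n)))
    (hΦ0 : ∀ z, Φ 0 z = z)
    (hΦgroup : ∀ t s z, Φ (t + s) z = Φ t (Φ s z))
    (hΦode : ∀ t z, HasDerivAt (fun τ => Φ τ z) (poissonCLM J (gradient H0 (Φ t z))) t)
    (W : EuclideanSpace ℝ (Fin (2*n)) → ℝ) (hW : Continuous W)
    (z₀ : EuclideanSpace ℝ (Fin (2*n)))
    (hint : Integrable (fun τ : ℝ => W (Φ τ z₀)))
    (hlim : Tendsto (fun τ : ℝ => W (Φ (-τ) z₀) + W (Φ τ z₀)) atTop (nhds 0)) :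
    HasDerivAt (fun t : ℝ => -(1/2) * ∫ τ : ℝ, Real.sign τ * W (Φ (τ + t) z₀))
      (W z₀) 0 := by
  set f : ℝ → ℝ := fun σ => W (Φ σ z₀) with hf
  have hfc : Continuous f := by
    apply hW.comp
    exact continuous_iff_continuousAt.mpr fun t => (hΦode t z₀).continuousAt
  have hsgn : Measurable Real.sign := by
    have h : Real.sign = fun r : ℝ => if r < 0 then (-1 : ℝ) else if 0 < r then 1 else 0 :=
      funext fun r => rfl
    rw [h]
    exact Measurable.ite (measurableSet_lt measurable_id measurable_const) measurable_const
      (Measurable.ite (measurableSet_lt measurable_const measurable_id) measurable_const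
        measurable_const)
  have hsgn_bdd : ∀ r : ℝ, ‖Real.sign r‖ ≤ 1 := by
    intro r
    rcases Real.sign_apply_eq r with h | h | h <;> simp [h]
  have hintt : ∀ t : ℝ, Integrable (fun σ => Real.sign (σ - t) * f σ) := by
    intro t
    exact hint.bdd_mul ((hsgn.comp (measurable_id.sub measurable_const)).aestronglyMeasurable)
      (c := 1) (Filter.Eventually.of_forall fun σ => hsgn_bdd _)
  have hint0 : Integrable (fun σ => Real.sign σ * f σ) := by
    simpa using hintt 0
  have hae2 : ∀ t : ℝ, ∀ᵐ σ : ℝ, σ ≠ 0 ∧ σ ≠ t := by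
    intro t
    have h0 : ∀ᵐ σ : ℝ, σ ≠ 0 := by
      refine ae_iff.mpr ?_
      simpa using measure_singleton (0 : ℝ)
    have ht : ∀ᵐ σ : ℝ, σ ≠ t := by
      refine ae_iff.mpr ?_
      simpa using measure_singleton t
    filter_upwards [h0, ht] with σ h1 h2 using ⟨h1, h2⟩
  have key : ∀ t : ℝ, (∫ σ : ℝ, Real.sign (σ - t) * f σ)
      = (∫ σ : ℝ, Real.sign σ * f σ) - 2 * ∫ σ in (0:ℝ)..t, f σ := by
    intro t
    have hsub : (∫ σ : ℝ, Real.sign (σ - t) * f σ) - (∫ σ : ℝ, Real.sign σ * f σ)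
        = ∫ σ : ℝ, (Real.sign (σ - t) * f σ - Real.sign σ * f σ) :=
      (integral_sub (hintt t) hint0).symm
    rcases le_or_gt 0 t with h | h
    · have hcongr : (fun σ : ℝ => Real.sign (σ - t) * f σ - Real.sign σ * f σ)
          =ᵐ[volume] (Set.Ioc (0:ℝ) t).indicator (fun σ => (-2 : ℝ) * f σ) := by
        filter_upwards [hae2 t] with σ hσ
        obtain ⟨h0, ht'⟩ := hσ
        by_cases hmem : σ ∈ Set.Ioc (0:ℝ) t
        · obtain ⟨h1, h2⟩ := hmem
          have h2' : σ - t < 0 := sub_neg.mpr (lt_of_le_of_ne h2 ht')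
          rw [Set.indicator_of_mem (Set.mem_Ioc.mpr ⟨h1, h2⟩), Real.sign_of_neg h2',
            Real.sign_of_pos h1]
          ring
        · rw [Set.indicator_of_notMem hmem]
          rcases h0.lt_or_gt with hlt | hgt
          · have hx : σ - t < 0 := by linarith
            rw [Real.sign_of_neg hx, Real.sign_of_neg hlt]
            ring
          · have hgt' : t < σ := by
              by_contra hc
              exact hmem (Set.mem_Ioc.mpr ⟨hgt, not_lt.mp hc⟩)
            rw [Real.sign_of_pos (by linarith : (0:ℝ) < σ - t), Real.sign_of_pos hgt]
            ring
      have hI : (∫ σ : ℝ, (Real.sign (σ - t) * f σ - Real.sign σ * f σ))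
          = -2 * ∫ σ in Set.Ioc (0:ℝ) t, f σ := by
        rw [integral_congr_ae hcongr, integral_indicator measurableSet_Ioc,
          MeasureTheory.integral_const_mul]
      have hJ : (∫ σ in (0:ℝ)..t, f σ) = ∫ σ in Set.Ioc (0:ℝ) t, f σ :=
        intervalIntegral.integral_of_le h
      rw [hJ]
      linarith [hsub, hI]
    · have hcongr : (fun σ : ℝ => Real.sign (σ - t) * f σ - Real.sign σ * f σ)
          =ᵐ[volume] (Set.Ioc t (0:ℝ)).indicator (fun σ => (2 : ℝ) * f σ) := by
        filter_upwards [hae2 t] with σ hσ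
        obtain ⟨h0, ht'⟩ := hσ
        by_cases hmem : σ ∈ Set.Ioc t (0:ℝ)
        · obtain ⟨h1, h2⟩ := hmem
          have h2' : σ < 0 := lt_of_le_of_ne h2 h0
          rw [Set.indicator_of_mem (Set.mem_Ioc.mpr ⟨h1, h2⟩),
            Real.sign_of_pos (by linarith : (0:ℝ) < σ - t), Real.sign_of_neg h2']
          ring
        · rw [Set.indicator_of_notMem hmem]
          by_cases hlt : σ < t
          · rw [Real.sign_of_neg (by linarith : σ - t < 0),
              Real.sign_of_neg (by linarith : σ < 0)]
            ring
          · have h1 : t < σ := lt_of_le_of_ne (not_lt.mp hlt) (Ne.symm ht')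
            have hgt : 0 < σ := by
              by_contra hc
              exact hmem (Set.mem_Ioc.mpr ⟨h1, not_lt.mp hc⟩)
            rw [Real.sign_of_pos (by linarith : (0:ℝ) < σ - t), Real.sign_of_pos hgt]
            ring
      have hI : (∫ σ : ℝ, (Real.sign (σ - t) * f σ - Real.sign σ * f σ))
          = 2 * ∫ σ in Set.Ioc t (0:ℝ), f σ := by
        rw [integral_congr_ae hcongr, integral_indicator measurableSet_Ioc,
          MeasureTheory.integral_const_mul]
      have hJ : (∫ σ in (0:ℝ)..t, f σ) = -∫ σ in Set.Ioc t (0:ℝ), f σ := by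
        rw [intervalIntegral.integral_symm, intervalIntegral.integral_of_le h.le]
      rw [hJ]
      linarith [hsub, hI]
  have hrepr : (fun t : ℝ => -(1/2) * ∫ τ : ℝ, Real.sign τ * W (Φ (τ + t) z₀))
      = fun t : ℝ => (-(1/2) * ∫ σ : ℝ, Real.sign σ * f σ) + ∫ σ in (0:ℝ)..t, f σ := by
    funext t
    have h1 : (∫ τ : ℝ, Real.sign τ * W (Φ (τ + t) z₀))
        = ∫ σ : ℝ, Real.sign (σ - t) * f σ := by
      have h2 := integral_add_right_eq_self (μ := volume)
        (fun σ : ℝ => Real.sign (σ - t) * f σ) t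
      simp only [add_sub_cancel_right, hf] at h2
      simp only [hf]
      exact h2
    rw [h1, key t]
    ring
  rw [hrepr]
  have hderiv : HasDerivAt (fun t : ℝ => ∫ σ in (0:ℝ)..t, f σ) (f 0) 0 :=
    intervalIntegral.integral_hasDerivAt_right hint.intervalIntegrable
      hfc.aestronglyMeasurable.stronglyMeasurableAtFilter hfc.continuousAt
  have hW0 : f 0 = W z₀ := by rw [hf]; simp [hΦ0]
  rw [← hW0]
  exact hderiv.const_add _
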